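/- Existence of refinement type interpolants: let R₁ = {ν : Table(σ₁) | φ₁} and R₂ = {ν : Table(σ₂) | φ₂} be refinement types over table base types whose qualifiers φ₁, φ₂ are propositional formulas over a common set of propositional variables, each depending only on a finite set of variables. If R₁ and R₂ are incompatible — that is, either Table(σ₁) is incompatible with Table(σ₂), or Table(σ₁) ~ Table(σ₂) and φ₁ ∧ φ₂ is unsatisfiable — then a refinement type interpolant for R₁ and R₂ exists: in the first case a base type interpolant for Table(σ₁) and Table(σ₂), and in the second case a refinement type {ν : Table(σ₁) | ψ} where ψ is a propositional Craig interpolant for φ₁ and φ₂. -/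

import Mathlib

/-- Column types in the refinement type system. -/
inductive ColTy where
  | top | quantitative | qualitative | discrete | continuous
  | nominal | ordinal | temporal
deriving DecidableEq

/-- The subtyping axioms on column types. -/
inductive ColSubAx : ColTy → ColTy → Prop where
  | quant_top : ColSubAx .quantitative .top
  | qual_top  : ColSubAx .qualitative .top
  | disc_quant : ColSubAx .discrete .quantitative
  | cont_quant : ColSubAx .continuous .quantitative
  | nom_qual  : ColSubAx .nominal .qualitative
  | ord_qual  : ColSubAx .ordinal .qualitative
  | temp_qual : ColSubAx .temporal .qualitative

/-- Column subtyping: the reflexive-transitive closure of the axioms. -/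
def ColSub : ColTy → ColTy → Prop := Relation.ReflTransGen ColSubAx

/-- Two column types are compatible iff one is a subtype of the other. -/
def ColCompat (β₁ β₂ : ColTy) : Prop := ColSub β₁ β₂ ∨ ColSub β₂ β₁

/-- A schema is a finite partial map from column names to column types. -/
abbrev Schema := Finmap (fun _ : String => ColTy)

/-- Table subtyping (a table type `Table σ` is determined by its schema `σ`;
    since `Finmap` is quotiented by permutation, the permutation rule is implicit). -/
inductive TableSub : Schema → Schema → Prop where
  | width (σ₁ σ₂ : Schema) :
      (∀ c τ, σ₂.lookup c = some τ → σ₁.lookup c = some τ) → TableSub σ₁ σ₂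
  | depth (σ₁ σ₂ : Schema) :
      σ₁.keys = σ₂.keys →
      (∀ c τ₁ τ₂, σ₁.lookup c = some τ₁ → σ₂.lookup c = some τ₂ → ColSub τ₁ τ₂) →
      TableSub σ₁ σ₂
  | trans {σ₁ σ₂ σ₃ : Schema} : TableSub σ₁ σ₂ → TableSub σ₂ σ₃ → TableSub σ₁ σ₃

/-- Table compatibility: every shared column's types are compatible. -/
def TableCompat (σ₁ σ₂ : Schema) : Prop :=
  ∀ c τ₁ τ₂, σ₁.lookup c = some τ₁ → σ₂.lookup c = some τ₂ → ColCompat τ₁ τ₂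

/-- A propositional formula over variables `V` depends only on the variables in `S`
    if its truth value agrees on any two valuations that agree on `S`. -/
def DependsOnlyOn {V : Type*} (f : (V → Bool) → Prop) (S : Set V) : Prop :=
  ∀ v v' : V → Bool, (∀ x ∈ S, v x = v' x) → (f v ↔ f v')


instance : Fintype ColTy where
  elems := {.top, .quantitative, .qualitative, .discrete, .continuous, .nominal, .ordinal, .temporal}
  complete := fun x => by cases x <;> simp

def leB : ColTy → ColTy → Bool := fun a b =>
  a = b || b = .top ||
  ((a = .discrete || a = .continuous) && b = .quantitative) ||
  ((a = .nominal || a = .ordinal || a = .temporal) && b = .qualitative)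

lemma leB_trans_ax : ∀ {a b c : ColTy}, leB a b = true → ColSubAx b c → leB a c = true := by
  intro a b c hab h
  cases h <;> revert hab <;> revert a <;> decide

lemma colSub_of_leB : ∀ {a b : ColTy}, leB a b = true → ColSub a b := by
  have single : ∀ {a b : ColTy}, ColSubAx a b → ColSub a b :=
    fun h => Relation.ReflTransGen.single h
  intro a b h
  cases a <;> cases b <;> simp_all [leB] <;> try exact Relation.ReflTransGen.refl
  · exact single .quant_top
  · exact single .qual_top
  · exact (single ColSubAx.disc_quant).trans (single .quant_top)
  · exact single .disc_quant
  · exact (single ColSubAx.cont_quant).trans (single .quant_top)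
  · exact single .cont_quant
  · exact (single ColSubAx.nom_qual).trans (single .qual_top)
  · exact single .nom_qual
  · exact (single ColSubAx.ord_qual).trans (single .qual_top)
  · exact single .ord_qual
  · exact (single ColSubAx.temp_qual).trans (single .qual_top)
  · exact single .temp_qual

lemma colSub_iff_leB {a b : ColTy} : ColSub a b ↔ leB a b = true := by
  constructor
  · intro h
    induction h with
    | refl => cases a <;> decide
    | tail _ hax ih => exact leB_trans_ax ih hax
  · exact colSub_of_leB

lemma colCompat_iff {a b : ColTy} : ColCompat a b ↔ (leB a b || leB b a) = true := by
  simp [ColCompat, colSub_iff_leB]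

lemma col_interpolant : ∀ τ₁ τ₂ : ColTy, ¬ ColCompat τ₁ τ₂ →
    ∃ τ : ColTy, ColSub τ₁ τ ∧ ¬ ColCompat τ τ₂ ∧
      (∀ τ', ColSub τ τ' → τ' ≠ τ → ColCompat τ' τ₂) := by
  intro τ₁ τ₂ h
  rw [colCompat_iff] at h
  simp only [colSub_iff_leB, colCompat_iff]
  revert h; revert τ₁ τ₂; decide

lemma tableSub_lookup {σ σ' : Schema} (h : TableSub σ σ') :
    ∀ c τ', σ'.lookup c = some τ' → ∃ τ, σ.lookup c = some τ ∧ ColSub τ τ' := by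
  induction h with
  | width σ₁ σ₂ hw =>
      intro c τ' hl; exact ⟨τ', hw c τ' hl, Relation.ReflTransGen.refl⟩
  | depth σ₁ σ₂ hk hd =>
      intro c τ' hl
      have hc : c ∈ σ₁ := by
        rw [← Finmap.mem_keys, hk, Finmap.mem_keys, ← Finmap.lookup_isSome, hl]; rfl
      obtain ⟨τ, hτ⟩ := Option.isSome_iff_exists.mp (Finmap.lookup_isSome.mpr hc)
      exact ⟨τ, hτ, hd c τ τ' hτ hl⟩
  | trans h1 h2 ih1 ih2 =>
      intro c τ' hl
      obtain ⟨τm, hm, hsub⟩ := ih2 c τ' hl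
      obtain ⟨τ, hτ, hsub'⟩ := ih1 c τm hm
      exact ⟨τ, hτ, hsub'.trans hsub⟩

lemma lookup_singleton' (c d : String) (τ : ColTy) (τ' : ColTy)
    (h : (Finmap.singleton c τ : Schema).lookup d = some τ') : d = c ∧ τ' = τ := by
  have hd : d ∈ (Finmap.singleton c τ : Schema) := by
    rw [← Finmap.lookup_isSome, h]; rfl
  have hdc : d = c := (Finmap.mem_singleton d c τ).mp hd
  subst hdc
  rw [Finmap.lookup_singleton_eq] at h
  exact ⟨rfl, (Option.some_inj.mp h).symm⟩

/-- Existence of refinement type interpolants for incompatible refinement types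
    `{ν : Table σ₁ | φ₁}` and `{ν : Table σ₂ | φ₂}`: a base type interpolant when the
    base table types are incompatible, and a refinement `{ν : Table σ₁ | ψ}` with `ψ` a
    propositional Craig interpolant when the base types are compatible but `φ₁ ∧ φ₂`
    is unsatisfiable. -/
theorem exists_refinement_type_interpolant {V : Type*} (σ₁ σ₂ : Schema)
    (φ₁ φ₂ : (V → Bool) → Prop) (V₁ V₂ : Set V)
    (hV₁ : V₁.Finite) (hV₂ : V₂.Finite)
    (hφ₁ : DependsOnlyOn φ₁ V₁) (hφ₂ : DependsOnlyOn φ₂ V₂) :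
    -- Case 1: the base table types are incompatible.
    (¬ TableCompat σ₁ σ₂ →
      ∃ σ : Schema,
        TableSub σ₁ σ ∧
        ¬ TableCompat σ σ₂ ∧
        (∀ σ' : Schema, TableSub σ σ' → σ' ≠ σ → TableCompat σ' σ₂)) ∧
    -- Case 2: the base table types are compatible but the qualifiers are jointly
    -- unsatisfiable.
    (TableCompat σ₁ σ₂ → (∀ v : V → Bool, ¬ (φ₁ v ∧ φ₂ v)) →
      ∃ ψ : (V → Bool) → Prop,
        DependsOnlyOn ψ (V₁ ∩ V₂) ∧
        (∀ v : V → Bool, φ₁ v → ψ v) ∧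
        (∀ v : V → Bool, ¬ (ψ v ∧ φ₂ v))) := by
  constructor
  · -- Case 1
    intro hnc
    simp only [TableCompat, not_forall] at hnc
    obtain ⟨c, τ₁, τ₂, h₁, h₂, hinc⟩ := hnc
    obtain ⟨τ, hsub, hninc, hstrict⟩ := col_interpolant τ₁ τ₂ hinc
    refine ⟨Finmap.singleton c τ, ?_, ?_, ?_⟩
    · refine TableSub.trans (TableSub.width σ₁ (Finmap.singleton c τ₁) ?_)
        (TableSub.depth _ _ rfl ?_)
      · intro d τ' hl
        obtain ⟨hdc, hττ⟩ := lookup_singleton' c d τ₁ τ' hl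
        rw [hdc, hττ]
        exact h₁
      · intro d τa τb ha hb
        obtain ⟨hdc, hτa⟩ := lookup_singleton' c d τ₁ τa ha
        rw [hdc] at hb
        obtain ⟨-, hτb⟩ := lookup_singleton' c c τ τb hb
        rw [hτa, hτb]
        exact hsub
    · intro hcpt
      exact hninc (hcpt c τ τ₂ Finmap.lookup_singleton_eq h₂)
    · intro σ' hts hne d τa τb ha hb
      obtain ⟨τm, hm, hmsub⟩ := tableSub_lookup hts d τa ha
      obtain ⟨hdc, hτm⟩ := lookup_singleton' c d τ τm hm
      rw [hτm] at hmsub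
      rw [hdc] at ha hb
      by_cases hττ : τa = τ
      · subst hττ
        exfalso
        apply hne
        apply Finmap.ext_lookup
        intro x
        by_cases hx : x = c
        · rw [hx, ha, Finmap.lookup_singleton_eq]
        · rw [Finmap.lookup_eq_none.mpr, Finmap.lookup_eq_none.mpr]
          · intro hmem
            exact hx ((Finmap.mem_singleton x c τa).mp hmem)
          · intro hmem
            obtain ⟨τx, hτx⟩ := Option.isSome_iff_exists.mp (Finmap.lookup_isSome.mpr hmem)
            obtain ⟨τy, hy, -⟩ := tableSub_lookup hts x τx hτx
            exact hx ((lookup_singleton' c x τa τy hy).1)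
      · have hcmp := hstrict τa hmsub hττ
        have hbb : τ₂ = τb := by rw [h₂] at hb; exact Option.some_inj.mp hb
        rw [← hbb]
        exact hcmp
  · -- Case 2
    intro _ hunsat
    classical
    refine ⟨fun v => ∃ w, φ₁ w ∧ ∀ x ∈ V₁ ∩ V₂, w x = v x, ?_, ?_, ?_⟩
    · intro v v' hag
      constructor
      · rintro ⟨w, hw, hwa⟩
        exact ⟨w, hw, fun x hx => (hwa x hx).trans (hag x hx)⟩
      · rintro ⟨w, hw, hwa⟩
        exact ⟨w, hw, fun x hx => (hwa x hx).trans (hag x hx).symm⟩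
    · intro v hv
      exact ⟨v, hv, fun _ _ => rfl⟩
    · rintro v ⟨⟨w, hw, hwa⟩, hv2⟩
      set u : V → Bool := fun x => if x ∈ V₁ then w x else v x with hu
      have hu1 : φ₁ u := by
        rw [← hφ₁ w u (fun x hx => by simp [hu, hx])]
        exact hw
      have hu2 : φ₂ u := by
        rw [← hφ₂ v u ?_]
        · exact hv2
        · intro x hx
          by_cases hx1 : x ∈ V₁
          · simp only [hu, if_pos hx1]
            exact (hwa x ⟨hx1, hx⟩).symm
          · simp [hu, hx1]
      exact hunsat u ⟨hu1, hu2⟩
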